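/- Let T > 0 and q₀, v₀, q_T, v_T ∈ ℝ. Define λ_q0 := (sinh T · (q_T − q₀) + (1 − cosh T)(v₀ + v_T)) / (2(cosh T − 1) − T sinh T), λ_v0 := (cosh T · v₀ − v_T + (cosh T − 1) λ_q0) / sinh T, and v⋆(t) := cosh t · v₀ + (cosh t − 1) λ_q0 − sinh t · λ_v0. Then for all t ∈ [0, T], |v⋆(t)| ≤ (3/(2T)) (|v₀ + v_T| + |q_T − q₀|) + exp(−t) |v₀| + exp(−(T − t)) |v_T|. (Hyperbolic velocity turnpike bound with respect to (v̄, ū) = (0, 0) for the optimal velocity trajectory of the double integrator, Theorem 1.) -/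

import Mathlib

open Real

section TurnpikeAux
lemma aux_nonneg (f f' : ℝ → ℝ) (hf : ∀ x, HasDerivAt f (f' x) x)
    (hd : ∀ x, 0 < x → 0 ≤ f' x) (h0 : f 0 = 0) {x : ℝ} (hx : 0 ≤ x) : 0 ≤ f x := by
  have hmono : MonotoneOn f (Set.Ici (0:ℝ)) := by
    apply monotoneOn_of_deriv_nonneg (convex_Ici 0)
    · exact fun y _ => (hf y).continuousAt.continuousWithinAt
    · exact fun y _ => (hf y).differentiableAt.differentiableWithinAt
    · intro y hy
      rw [interior_Ici] at hy
      rw [(hf y).deriv]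
      exact hd y hy
  have := hmono Set.self_mem_Ici (Set.mem_Ici.2 hx) hx
  simpa [h0] using this

lemma aux_sinh_le (x : ℝ) (hx : 0 ≤ x) : sinh x ≤ x * cosh x := by
  have h := aux_nonneg (fun y => y * cosh y - sinh y) (fun y => y * sinh y)
    (fun y => by
      have h := ((hasDerivAt_id y).mul (Real.hasDerivAt_cosh y)).sub (Real.hasDerivAt_sinh y)
      exact h.congr_deriv (by simp only [id_eq]; ring))
    (fun y hy => mul_nonneg hy.le (sinh_nonneg_iff.2 hy.le)) (by simp) hx
  linarith

lemma aux_sinh_lt (x : ℝ) (hx : 0 < x) : sinh x < x * cosh x := by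
  have hmono : StrictMonoOn (fun y => y * cosh y - sinh y) (Set.Ici (0:ℝ)) := by
    apply strictMonoOn_of_deriv_pos (convex_Ici 0)
    · fun_prop
    · intro y hy
      rw [interior_Ici] at hy
      have h := ((hasDerivAt_id y).mul (Real.hasDerivAt_cosh y)).sub (Real.hasDerivAt_sinh y)
      have h2 : HasDerivAt (fun y => y * cosh y - sinh y) (y * sinh y) y := by
        exact h.congr_deriv (by simp only [id_eq]; ring)
      rw [h2.deriv]
      exact mul_pos hy (sinh_pos_iff.2 hy)
  have := hmono Set.self_mem_Ici (Set.mem_Ici.2 hx.le) hx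
  simp only [cosh_zero, sinh_zero] at this
  linarith

lemma aux_cosh_le (x : ℝ) (hx : 0 ≤ x) : 2 * cosh x ≤ x * sinh x + 2 := by
  have h := aux_nonneg (fun y => y * sinh y + 2 - 2 * cosh y) (fun y => y * cosh y - sinh y)
    (fun y => by
      have h := (((hasDerivAt_id y).mul (Real.hasDerivAt_sinh y)).add_const 2).sub
        ((Real.hasDerivAt_cosh y).const_mul 2)
      exact h.congr_deriv (by simp only [id_eq]; ring))
    (fun y hy => by show 0 ≤ y * cosh y - sinh y; linarith [aux_sinh_le y hy.le]) (by simp) hx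
  linarith

lemma aux_key (x : ℝ) (hx : 0 ≤ x) : 3 * sinh x ≤ x * cosh x + 2 * x := by
  have h := aux_nonneg (fun y => y * cosh y + 2 * y - 3 * sinh y)
    (fun y => y * sinh y + 2 - 2 * cosh y)
    (fun y => by
      have h := (((hasDerivAt_id y).mul (Real.hasDerivAt_cosh y)).add
        ((hasDerivAt_id y).const_mul 2)).sub ((Real.hasDerivAt_sinh y).const_mul 3)
      exact h.congr_deriv (by simp only [id_eq]; ring))
    (fun y hy => by show 0 ≤ y * sinh y + 2 - 2 * cosh y; linarith [aux_cosh_le y hy.le]) (by simp) hx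
  linarith

lemma aux_sinhT (T : ℝ) : sinh T = 2 * sinh (T/2) * cosh (T/2) := by
  have := Real.sinh_two_mul (T/2)
  rw [show 2 * (T/2) = T by ring] at this
  linarith

lemma aux_coshT (T : ℝ) : cosh T = 2 * sinh (T/2) ^ 2 + 1 := by
  have h1 := Real.cosh_two_mul (T/2)
  have h2 := Real.cosh_sq (T/2)
  rw [show 2 * (T/2) = T by ring] at h1
  rw [h1, h2]; ring

lemma aux_A_pos (T : ℝ) (hT : 0 < T) : 0 < T * sinh T - 2 * (cosh T - 1) := by
  have hx : 0 < T / 2 := by linarith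
  have hs : 0 < sinh (T/2) := sinh_pos_iff.2 hx
  have h := aux_sinh_lt (T/2) hx
  rw [aux_sinhT T, aux_coshT T]
  nlinarith [hs]

lemma aux_g_nonneg (T t : ℝ) (ht0 : 0 ≤ t) (htT : t ≤ T) :
    0 ≤ sinh T - sinh t - sinh (T - t) := by
  have h := Real.sinh_add t (T - t)
  rw [show t + (T - t) = T by ring] at h
  have hst : 0 ≤ sinh t := sinh_nonneg_iff.2 ht0
  have hsTt : 0 ≤ sinh (T - t) := sinh_nonneg_iff.2 (by linarith)
  nlinarith [Real.one_le_cosh t, Real.one_le_cosh (T - t)]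

lemma aux_K1 (T t : ℝ) (hT : 0 < T) (ht0 : 0 ≤ t) (htT : t ≤ T) :
    2 * T * (sinh T - sinh t - sinh (T - t)) ≤ 3 * (T * sinh T - 2 * (cosh T - 1)) := by
  have hx : 0 < T / 2 := by linarith
  have hs : 0 < sinh (T/2) := sinh_pos_iff.2 hx
  have hgmax : 2 * sinh (T/2) ≤ sinh t + sinh (T - t) := by
    have h1 := Real.sinh_add (T/2) (t - T/2)
    have h2 := Real.sinh_sub (T/2) (t - T/2)
    rw [show T/2 + (t - T/2) = t by ring] at h1
    rw [show T/2 - (t - T/2) = T - t by ring] at h2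
    nlinarith [Real.one_le_cosh (t - T/2), hs]
  have hkey := aux_key (T/2) hx.le
  nlinarith [mul_le_mul_of_nonneg_left hgmax (by linarith : (0:ℝ) ≤ 2*T),
    mul_nonneg hs.le (by nlinarith : (0:ℝ) ≤ T/2 * cosh (T/2) + 2*(T/2) - 3 * sinh (T/2)),
    aux_sinhT T, aux_coshT T]

lemma aux_cs (T : ℝ) (hT : 0 < T) : cosh T - 1 ≤ sinh T := by
  have hx : 0 < T / 2 := by linarith
  have hs : 0 < sinh (T/2) := sinh_pos_iff.2 hx
  have h := Real.cosh_sub_sinh (T/2)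
  have he := Real.exp_pos (-(T/2))
  rw [aux_sinhT T, aux_coshT T]
  nlinarith [hs]

lemma aux_b1 (T t : ℝ) (ht0 : 0 ≤ t) (htT : t ≤ T) : sinh (T - t) ≤ exp (-t) * sinh T := by
  have hE1 : (1:ℝ) ≤ exp t := Real.one_le_exp ht0
  have hEF : exp t ≤ exp T := Real.exp_le_exp.2 htT
  have h : exp (-t) * sinh T - sinh (T - t) = (exp t ^ 2 - 1) / (2 * exp t * exp T) := by
    rw [Real.sinh_eq, Real.sinh_eq, Real.exp_neg, Real.exp_neg, Real.exp_neg, Real.exp_sub]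
    field_simp
    ring
  linarith [div_nonneg (by nlinarith : (0:ℝ) ≤ exp t ^ 2 - 1)
    (by positivity : (0:ℝ) ≤ 2 * exp t * exp T)]

lemma aux_b2 (T t : ℝ) (ht0 : 0 ≤ t) (htT : t ≤ T) : sinh t ≤ exp (-(T - t)) * sinh T := by
  have hE1 : (1:ℝ) ≤ exp t := Real.one_le_exp ht0
  have hEF : exp t ≤ exp T := Real.exp_le_exp.2 htT
  have h : exp (-(T - t)) * sinh T - sinh t =
      (exp T ^ 2 - exp t ^ 2) / (2 * exp t * exp T ^ 2) := by
    rw [Real.sinh_eq, Real.sinh_eq, Real.exp_neg, Real.exp_neg, Real.exp_neg, Real.exp_sub]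
    field_simp
    ring
  linarith [div_nonneg (by nlinarith : (0:ℝ) ≤ exp T ^ 2 - exp t ^ 2)
    (by positivity : (0:ℝ) ≤ 2 * exp t * exp T ^ 2)]
end TurnpikeAux

/-- Theorem 1: hyperbolic velocity turnpike bound with respect to
`(v̄, ū) = (0, 0)` for the optimal velocity trajectory of the double integrator. -/
theorem double_integrator_hyperbolic_velocity_turnpike
    (T : ℝ) (hT : 0 < T) (q₀ v₀ qT vT : ℝ)
    (lamq0 lamv0 : ℝ)
    (hlamq0 : lamq0 =
      (sinh T * (qT - q₀) + (1 - cosh T) * (v₀ + vT)) /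
        (2 * (cosh T - 1) - T * sinh T))
    (hlamv0 : lamv0 = (cosh T * v₀ - vT + (cosh T - 1) * lamq0) / sinh T)
    (vstar : ℝ → ℝ)
    (hvstar : vstar = fun t =>
      cosh t * v₀ + (cosh t - 1) * lamq0 - sinh t * lamv0) :
    ∀ t ∈ Set.Icc (0 : ℝ) T,
      |vstar t| ≤ (3 / (2 * T)) * (|v₀ + vT| + |qT - q₀|) +
        exp (-t) * |v₀| + exp (-(T - t)) * |vT| := by
  intro t ht
  obtain ⟨ht0, htT⟩ := ht
  have hsT : 0 < sinh T := sinh_pos_iff.2 hT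
  set A : ℝ := T * sinh T - 2 * (cosh T - 1) with hAdef
  set g : ℝ := sinh T - sinh t - sinh (T - t) with hgdef
  have hA : 0 < A := aux_A_pos T hT
  have hg0 : 0 ≤ g := aux_g_nonneg T t ht0 htT
  have hK1 : 2 * T * g ≤ 3 * A := aux_K1 T t hT ht0 htT
  have hcs : cosh T - 1 ≤ sinh T := aux_cs T hT
  have hc1 : 0 ≤ cosh T - 1 := by linarith [Real.one_le_cosh T]
  have hst : 0 ≤ sinh t := sinh_nonneg_iff.2 ht0
  have hsTt : 0 ≤ sinh (T - t) := sinh_nonneg_iff.2 (by linarith)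
  clear_value A g
  have hform : vstar t =
      (sinh (T - t) * v₀ + sinh t * vT - g * lamq0) / sinh T := by
    rw [hvstar]
    simp only
    rw [hlamv0, hgdef, Real.sinh_sub]
    field_simp
    ring
  set B : ℝ := |v₀ + vT| + |qT - q₀| with hBdef
  set N : ℝ := sinh T * |qT - q₀| + (cosh T - 1) * |v₀ + vT| with hNdef
  have hN0 : 0 ≤ N := by
    rw [hNdef]
    have h1 := abs_nonneg (qT - q₀)
    have h2 := abs_nonneg (v₀ + vT)
    nlinarith
  have hlamA : A * |lamq0| ≤ N := by
    rw [hlamq0, show 2 * (cosh T - 1) - T * sinh T = -A by rw [hAdef]; ring,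
      abs_div, abs_neg, abs_of_pos hA]
    rw [mul_comm A, div_mul_cancel₀ _ (ne_of_gt hA)]
    calc |sinh T * (qT - q₀) + (1 - cosh T) * (v₀ + vT)|
        ≤ |sinh T * (qT - q₀)| + |(1 - cosh T) * (v₀ + vT)| := abs_add_le _ _
      _ = N := by
          rw [hNdef, abs_mul, abs_mul, abs_of_pos hsT,
            abs_of_nonpos (by linarith : 1 - cosh T ≤ 0)]
          ring
  clear_value B N
  have hb1 : sinh (T - t) ≤ exp (-t) * sinh T := aux_b1 T t ht0 htT
  have hb2 : sinh t ≤ exp (-(T - t)) * sinh T := aux_b2 T t ht0 htT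
  have htri : |vstar t| ≤ (sinh (T - t) * |v₀| + sinh t * |vT| + g * |lamq0|) / sinh T := by
    rw [hform, abs_div, abs_of_pos hsT]
    gcongr
    have h3 := abs_add_three (sinh (T - t) * v₀) (sinh t * vT) (-(g * lamq0))
    rw [show sinh (T - t) * v₀ + sinh t * vT + -(g * lamq0)
        = sinh (T - t) * v₀ + sinh t * vT - g * lamq0 by ring] at h3
    rw [abs_neg, abs_mul, abs_mul, abs_mul, abs_of_nonneg hsTt, abs_of_nonneg hst,
      abs_of_nonneg hg0] at h3
    exact h3
  have t1 : sinh (T - t) * |v₀| / sinh T ≤ exp (-t) * |v₀| := by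
    rw [div_le_iff₀ hsT]
    nlinarith [mul_le_mul_of_nonneg_right hb1 (abs_nonneg v₀)]
  have t2 : sinh t * |vT| / sinh T ≤ exp (-(T - t)) * |vT| := by
    rw [div_le_iff₀ hsT]
    nlinarith [mul_le_mul_of_nonneg_right hb2 (abs_nonneg vT)]
  have t3 : g * |lamq0| / sinh T ≤ 3 / (2 * T) * B := by
    rw [div_le_iff₀ hsT, show 3 / (2 * T) * B * sinh T = 3 * B * sinh T / (2 * T) by ring,
      le_div_iff₀ (by linarith : (0:ℝ) < 2 * T)]
    have hlam : |lamq0| ≤ N / A := (le_div_iff₀ hA).2 (by linarith [hlamA])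
    calc g * |lamq0| * (2 * T) = (2 * T * g) * |lamq0| := by ring
      _ ≤ (2 * T * g) * (N / A) := by
          apply mul_le_mul_of_nonneg_left hlam
          exact mul_nonneg (by linarith) hg0
      _ ≤ (3 * A) * (N / A) := mul_le_mul_of_nonneg_right hK1 (div_nonneg hN0 hA.le)
      _ = 3 * N := by field_simp
      _ ≤ 3 * B * sinh T := by
          rw [hNdef, hBdef]
          nlinarith [mul_le_mul_of_nonneg_right hcs (abs_nonneg (v₀ + vT)),
            abs_nonneg (qT - q₀)]
  calc |vstar t| ≤ (sinh (T - t) * |v₀| + sinh t * |vT| + g * |lamq0|) / sinh T := htri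
    _ = sinh (T - t) * |v₀| / sinh T + sinh t * |vT| / sinh T + g * |lamq0| / sinh T := by
        ring
    _ ≤ 3 / (2 * T) * B + exp (-t) * |v₀| + exp (-(T - t)) * |vT| := by linarith
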